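/- (Lemma 4.6, MIA-Witness) Let P & Q be the conjunctive product of Modal Interface Automata P and Q with common input and output alphabets, and F its set of inconsistent states. Then: (i) for every MIA-witness W of P & Q, F ∩ W = ∅; and (ii) the set W = { (p,q) ∈ P × Q | there exist a MIA R and r ∈ R with r ⊑_MIA p and r ⊑_MIA q } ∪ P ∪ Q is a MIA-witness of P & Q. -/

import Mathlib

/-- Transition labels: `none` is the silent action τ, `some a` a visible action. -/
abbrev Lbl (A : Type) : Type := Option A

/-- Weak internal transition: a (possibly empty) sequence of τ-steps. -/
def WeakEps {S A : Type} (tr : S → Lbl A → S → Prop) : S → S → Prop :=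
  Relation.ReflTransGen (fun p q => tr p none q)

/-- Weak transition: τ-steps followed by one step labelled `α`. -/
def WeakTr {S A : Type} (tr : S → Lbl A → S → Prop) (p : S) (α : Lbl A) (p' : S) : Prop :=
  ∃ p'', WeakEps tr p p'' ∧ tr p'' α p'

/-- State set of binary compositions: copies of both components plus combined states. -/
inductive CState (S T : Type) : Type
  | left : S → CState S T
  | right : T → CState S T
  | comb : S → T → CState S T

/-- `(must, may)` is a Modal Interface Automaton over inputs `I` and outputs `O`:
a syntactically consistent dMTS with labels in `I ∪ O`, at most one (disjunctive)
must-transition per input, and every input-may-transition underlies it. -/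
def IsMIA {S A : Type} (I O : Set A) (must : S → A → Set S → Prop)
    (may : S → Lbl A → S → Prop) : Prop :=
  Disjoint I O ∧
  (∀ s a S', must s a S' → S'.Nonempty) ∧
  (∀ s a S' s', must s a S' → s' ∈ S' → may s (some a) s') ∧
  (∀ s a S', must s a S' → a ∈ I ∪ O) ∧
  (∀ s a s', may s (some a) s' → a ∈ I ∪ O) ∧
  (∀ s i S' S'', i ∈ I → must s i S' → must s i S'' → S' = S'') ∧
  (∀ s i s', i ∈ I → may s (some i) s' → ∃ S', must s i S' ∧ s' ∈ S')

/-- Observational MIA-refinement relation: like modal refinement, but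
may-transitions only need to be matched for outputs and τ. -/
def IsMIASim {S T A : Type} (O : Set A) (mustP : S → A → Set S → Prop)
    (mayP : S → Lbl A → S → Prop) (mustQ : T → A → Set T → Prop)
    (mayQ : T → Lbl A → T → Prop) (R : S → T → Prop) : Prop :=
  ∀ p q, R p q →
    (∀ a Q', mustQ q a Q' → ∃ P', mustP p a P' ∧ ∀ p' ∈ P', ∃ q' ∈ Q', R p' q') ∧
    (∀ a p', a ∈ O → mayP p (some a) p' → ∃ q', WeakTr mayQ q (some a) q' ∧ R p' q') ∧
    (∀ p', mayP p none p' → ∃ q', WeakEps mayQ q q' ∧ R p' q')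

/-- MIA-refinement `p ⊑_MIA q`. -/
def MIARef {S T A : Type} (O : Set A) (mustP : S → A → Set S → Prop)
    (mayP : S → Lbl A → S → Prop) (mustQ : T → A → Set T → Prop)
    (mayQ : T → Lbl A → T → Prop) (p : S) (q : T) : Prop :=
  ∃ R, IsMIASim O mustP mayP mustQ mayQ R ∧ R p q

/-- Must-transitions of the MIA conjunctive product `P & Q`
(rules (OMust1), (OMust2), (IMust1)-(IMust3) plus inherited ones). -/
inductive MConjMust {S T A : Type} (I O : Set A) (mustP : S → A → Set S → Prop)
    (mayP : S → Lbl A → S → Prop) (mustQ : T → A → Set T → Prop)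
    (mayQ : T → Lbl A → T → Prop) : CState S T → A → Set (CState S T) → Prop
  | fromP {p a P'} : mustP p a P' →
      MConjMust I O mustP mayP mustQ mayQ (CState.left p) a (CState.left '' P')
  | fromQ {q a Q'} : mustQ q a Q' →
      MConjMust I O mustP mayP mustQ mayQ (CState.right q) a (CState.right '' Q')
  | omust1 {p q o P'} : o ∈ O → mustP p o P' → (∃ q', WeakTr mayQ q (some o) q') →
      MConjMust I O mustP mayP mustQ mayQ (CState.comb p q) o
        {x | ∃ p' q', x = CState.comb p' q' ∧ p' ∈ P' ∧ WeakTr mayQ q (some o) q'}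
  | omust2 {p q o Q'} : o ∈ O → (∃ p', WeakTr mayP p (some o) p') → mustQ q o Q' →
      MConjMust I O mustP mayP mustQ mayQ (CState.comb p q) o
        {x | ∃ p' q', x = CState.comb p' q' ∧ WeakTr mayP p (some o) p' ∧ q' ∈ Q'}
  | imust1 {p q i P'} : i ∈ I → mustP p i P' → ¬ (∃ Q', mustQ q i Q') →
      MConjMust I O mustP mayP mustQ mayQ (CState.comb p q) i (CState.left '' P')
  | imust2 {p q i Q'} : i ∈ I → ¬ (∃ P', mustP p i P') → mustQ q i Q' →
      MConjMust I O mustP mayP mustQ mayQ (CState.comb p q) i (CState.right '' Q')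
  | imust3 {p q i P' Q'} : i ∈ I → mustP p i P' → mustQ q i Q' →
      MConjMust I O mustP mayP mustQ mayQ (CState.comb p q) i
        {x | ∃ p' q', x = CState.comb p' q' ∧ p' ∈ P' ∧ q' ∈ Q'}

/-- May-transitions of the MIA conjunctive product `P & Q`
(rules (May1)-(May3), (IMay1)-(IMay3) plus inherited ones). -/
inductive MConjMay {S T A : Type} (I O : Set A) (mayP : S → Lbl A → S → Prop)
    (mayQ : T → Lbl A → T → Prop) : CState S T → Lbl A → CState S T → Prop
  | fromP {p α p'} : mayP p α p' → MConjMay I O mayP mayQ (CState.left p) α (CState.left p')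
  | fromQ {q α q'} : mayQ q α q' → MConjMay I O mayP mayQ (CState.right q) α (CState.right q')
  | may1 {p q p'} : WeakTr mayP p none p' →
      MConjMay I O mayP mayQ (CState.comb p q) none (CState.comb p' q)
  | may2 {p q q'} : WeakTr mayQ q none q' →
      MConjMay I O mayP mayQ (CState.comb p q) none (CState.comb p q')
  | may3 {p q α p' q'} : (∀ x, α = some x → x ∈ O) → WeakTr mayP p α p' →
      WeakTr mayQ q α q' → MConjMay I O mayP mayQ (CState.comb p q) α (CState.comb p' q')
  | imay1 {p q i p'} : i ∈ I → mayP p (some i) p' → ¬ (∃ q', mayQ q (some i) q') →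
      MConjMay I O mayP mayQ (CState.comb p q) (some i) (CState.left p')
  | imay2 {p q i q'} : i ∈ I → ¬ (∃ p', mayP p (some i) p') → mayQ q (some i) q' →
      MConjMay I O mayP mayQ (CState.comb p q) (some i) (CState.right q')
  | imay3 {p q i p' q'} : i ∈ I → mayP p (some i) p' → mayQ q (some i) q' →
      MConjMay I O mayP mayQ (CState.comb p q) (some i) (CState.comb p' q')

/-- The set `F` of logically inconsistent states of the MIA conjunctive product
(rules (F1)-(F3)); only combined states `p ∧ q` can be inconsistent. -/
inductive MIncons {S T A : Type} (I O : Set A) (mustP : S → A → Set S → Prop)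
    (mayP : S → Lbl A → S → Prop) (mustQ : T → A → Set T → Prop)
    (mayQ : T → Lbl A → T → Prop) : CState S T → Prop
  | f1 {p q o P'} : o ∈ O → mustP p o P' → ¬ (∃ q', WeakTr mayQ q (some o) q') →
      MIncons I O mustP mayP mustQ mayQ (CState.comb p q)
  | f2 {p q o Q'} : o ∈ O → ¬ (∃ p', WeakTr mayP p (some o) p') → mustQ q o Q' →
      MIncons I O mustP mayP mustQ mayQ (CState.comb p q)
  | f3 {p q a R'} : MConjMust I O mustP mayP mustQ mayQ (CState.comb p q) a R' →
      (∀ x ∈ R', MIncons I O mustP mayP mustQ mayQ x) →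
      MIncons I O mustP mayP mustQ mayQ (CState.comb p q)

/-- Must-transitions of the MIA-conjunction `P ∧ Q`: the product pruned of
inconsistent states (which are also removed from targets). -/
def MAndMust {S T A : Type} (I O : Set A) (mustP : S → A → Set S → Prop)
    (mayP : S → Lbl A → S → Prop) (mustQ : T → A → Set T → Prop)
    (mayQ : T → Lbl A → T → Prop) (s : CState S T) (a : A) (R'' : Set (CState S T)) : Prop :=
  ¬ MIncons I O mustP mayP mustQ mayQ s ∧
  ∃ R', MConjMust I O mustP mayP mustQ mayQ s a R' ∧
    R'' = {x ∈ R' | ¬ MIncons I O mustP mayP mustQ mayQ x}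

/-- May-transitions of the MIA-conjunction `P ∧ Q`. -/
def MAndMay {S T A : Type} (I O : Set A) (mustP : S → A → Set S → Prop)
    (mayP : S → Lbl A → S → Prop) (mustQ : T → A → Set T → Prop)
    (mayQ : T → Lbl A → T → Prop) (s : CState S T) (α : Lbl A) (s' : CState S T) : Prop :=
  ¬ MIncons I O mustP mayP mustQ mayQ s ∧ ¬ MIncons I O mustP mayP mustQ mayQ s' ∧
  MConjMay I O mayP mayQ s α s'

/-- A MIA-witness of the conjunctive product `P & Q` (conditions (W1)-(W3)). -/
def IsMIAWitness {S T A : Type} (I O : Set A) (mustP : S → A → Set S → Prop)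
    (mayP : S → Lbl A → S → Prop) (mustQ : T → A → Set T → Prop)
    (mayQ : T → Lbl A → T → Prop) (W : Set (CState S T)) : Prop :=
  ∀ p q, CState.comb p q ∈ W →
    (∀ o P', o ∈ O → mustP p o P' → ∃ q', WeakTr mayQ q (some o) q') ∧
    (∀ o Q', o ∈ O → mustQ q o Q' → ∃ p', WeakTr mayP p (some o) p') ∧
    (∀ a R', MConjMust I O mustP mayP mustQ mayQ (CState.comb p q) a R' → (R' ∩ W).Nonempty)

/-- Lemma 4.6 (MIA-witness): (i) every MIA-witness is disjoint from the
inconsistency set `F`; (ii) the combined states with a common implementation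
together with all states of `P` and `Q` form a MIA-witness of `P & Q`. -/
theorem mia_concrete_witness {A S T : Type} (I O : Set A)
    (mustP : S → A → Set S → Prop) (mayP : S → Lbl A → S → Prop)
    (mustQ : T → A → Set T → Prop) (mayQ : T → Lbl A → T → Prop)
    (hP : IsMIA I O mustP mayP) (hQ : IsMIA I O mustQ mayQ) :
    (∀ W : Set (CState S T), IsMIAWitness I O mustP mayP mustQ mayQ W →
      {x | MIncons I O mustP mayP mustQ mayQ x} ∩ W = ∅) ∧
    IsMIAWitness I O mustP mayP mustQ mayQ
      ({x | ∃ p q, x = CState.comb p q ∧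
          ∃ (U : Type) (mustR : U → A → Set U → Prop) (mayR : U → Lbl A → U → Prop),
            IsMIA I O mustR mayR ∧ ∃ r : U,
              MIARef O mustR mayR mustP mayP r p ∧ MIARef O mustR mayR mustQ mayQ r q} ∪
        {x | ∃ p, x = CState.left p} ∪ {x | ∃ q, x = CState.right q}) := by
  constructor
  · intro W hW
    ext x
    simp only [Set.mem_inter_iff, Set.mem_setOf_eq, Set.mem_empty_iff_false, iff_false, not_and]
    intro hF
    induction hF with
    | f1 ho hmust hno =>
        intro hxW
        exact hno ((hW _ _ hxW).1 _ _ ho hmust)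
    | f2 ho hno hmust =>
        intro hxW
        exact hno ((hW _ _ hxW).2.1 _ _ ho hmust)
    | f3 hmust hall ih =>
        intro hxW
        obtain ⟨y, hyR, hyW⟩ := (hW _ _ hxW).2.2 _ _ hmust
        exact ih y hyR hyW
  · rintro p q hpq
    have hmem : ∃ (U : Type) (mustR : U → A → Set U → Prop) (mayR : U → Lbl A → U → Prop),
        IsMIA I O mustR mayR ∧ ∃ r : U,
          MIARef O mustR mayR mustP mayP r p ∧ MIARef O mustR mayR mustQ mayQ r q := by
      rcases hpq with (h | h) | h
      · rcases h with ⟨p0, q0, heq, hrest⟩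
        obtain ⟨rfl, rfl⟩ : p = p0 ∧ q = q0 := by
          injection heq with h1 h2; exact ⟨h1, h2⟩
        exact hrest
      · rcases h with ⟨p0, heq⟩; exact (nomatch heq)
      · rcases h with ⟨q0, heq⟩; exact (nomatch heq)
    obtain ⟨U, mustR, mayR, hR, r, ⟨Rp, hRpSim, hRp⟩, ⟨Rq, hRqSim, hRq⟩⟩ := hmem
    obtain ⟨hdisj, hne, hsyn, hmustL, hmayL, hidet, hiund⟩ := hR
    refine ⟨?_, ?_, ?_⟩
    · intro o P' hoO hmust
      obtain ⟨R0, hmustR, hmatch⟩ := (hRpSim r p hRp).1 _ _ hmust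
      obtain ⟨r', hr'⟩ := hne _ _ _ hmustR
      obtain ⟨q', hq', _⟩ := (hRqSim r q hRq).2.1 o r' hoO (hsyn _ _ _ _ hmustR hr')
      exact ⟨q', hq'⟩
    · intro o Q' hoO hmust
      obtain ⟨R0, hmustR, hmatch⟩ := (hRqSim r q hRq).1 _ _ hmust
      obtain ⟨r', hr'⟩ := hne _ _ _ hmustR
      obtain ⟨p', hp', _⟩ := (hRpSim r p hRp).2.1 o r' hoO (hsyn _ _ _ _ hmustR hr')
      exact ⟨p', hp'⟩
    · intro a R' hm
      cases hm with
      | omust1 hoO hmustP hq1 =>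
          obtain ⟨R0, hmustR, hmatch⟩ := (hRpSim r p hRp).1 _ _ hmustP
          obtain ⟨r', hr'⟩ := hne _ _ _ hmustR
          obtain ⟨p', hp'P, hRp'⟩ := hmatch r' hr'
          obtain ⟨q'', hq'', hRq''⟩ :=
            (hRqSim r q hRq).2.1 a r' hoO (hsyn _ _ _ _ hmustR hr')
          refine ⟨CState.comb p' q'', ⟨⟨p', q'', rfl, hp'P, hq''⟩, ?_⟩⟩
          exact Or.inl (Or.inl ⟨p', q'', rfl, U, mustR, mayR,
            ⟨hdisj, hne, hsyn, hmustL, hmayL, hidet, hiund⟩, r',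
            ⟨Rp, hRpSim, hRp'⟩, ⟨Rq, hRqSim, hRq''⟩⟩)
      | omust2 hoO hp1 hmustQ =>
          obtain ⟨R0, hmustR, hmatch⟩ := (hRqSim r q hRq).1 _ _ hmustQ
          obtain ⟨r', hr'⟩ := hne _ _ _ hmustR
          obtain ⟨q', hq'Q, hRq'⟩ := hmatch r' hr'
          obtain ⟨p'', hp'', hRp''⟩ :=
            (hRpSim r p hRp).2.1 a r' hoO (hsyn _ _ _ _ hmustR hr')
          refine ⟨CState.comb p'' q', ⟨⟨p'', q', rfl, hp'', hq'Q⟩, ?_⟩⟩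
          exact Or.inl (Or.inl ⟨p'', q', rfl, U, mustR, mayR,
            ⟨hdisj, hne, hsyn, hmustL, hmayL, hidet, hiund⟩, r',
            ⟨Rp, hRpSim, hRp''⟩, ⟨Rq, hRqSim, hRq'⟩⟩)
      | imust1 hiI hmustP hno =>
          obtain ⟨p', hp'⟩ := hP.2.1 _ _ _ hmustP
          exact ⟨CState.left p', ⟨⟨p', hp', rfl⟩, Or.inl (Or.inr ⟨p', rfl⟩)⟩⟩
      | imust2 hiI hno hmustQ =>
          obtain ⟨q', hq'⟩ := hQ.2.1 _ _ _ hmustQ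
          exact ⟨CState.right q', ⟨⟨q', hq', rfl⟩, Or.inr ⟨q', rfl⟩⟩⟩
      | imust3 hiI hmustP hmustQ =>
          obtain ⟨R1, hmustR1, hmatch1⟩ := (hRpSim r p hRp).1 _ _ hmustP
          obtain ⟨R2, hmustR2, hmatch2⟩ := (hRqSim r q hRq).1 _ _ hmustQ
          have hEq : R1 = R2 := hidet _ _ _ _ hiI hmustR1 hmustR2
          obtain ⟨r', hr'⟩ := hne _ _ _ hmustR1
          obtain ⟨p', hp'P, hRp'⟩ := hmatch1 r' hr'
          obtain ⟨q', hq'Q, hRq'⟩ := hmatch2 r' (hEq ▸ hr')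
          refine ⟨CState.comb p' q', ⟨⟨p', q', rfl, hp'P, hq'Q⟩, ?_⟩⟩
          exact Or.inl (Or.inl ⟨p', q', rfl, U, mustR, mayR,
            ⟨hdisj, hne, hsyn, hmustL, hmayL, hidet, hiund⟩, r',
            ⟨Rp, hRpSim, hRp'⟩, ⟨Rq, hRqSim, hRq'⟩⟩)
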